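/- Let g = 2k+1 with k ≥ 6, and let a be a complex number with a ≠ 0 and a ≠ 1. With the parameter choice a_{i,1} = i·a and a_{i,2} = i for i = 1, …, g−1, the 5×5 complex matrix whose columns are indexed by the pairs (i,j) ∈ {(2,k+1), (3,k+1), (k+1,g−2), (k+1,g−1), (k−1,k+2)} and whose rows consist of the five quantities ν_{ij,1}(a_{k+1,1}), ν'_{ij,1}(a_{k+1,1}), ν_{ij,2}(a_{k+1,2}), ν'_{ij,2}(a_{k+1,2}), τ_{ij,k+1} is invertible. -/

import Mathlib

open Polynomial Finset

/-- `A_h = ∏_{i=1}^{g-1} a_{i,h}`. -/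
noncomputable def Aprod (g : ℕ) (a : ℕ → ℕ → ℂ) (h : ℕ) : ℂ :=
  ∏ i ∈ Finset.Icc 1 (g - 1), a i h

/-- `d_2 = 1`, `d_1 = -A_1/A_2`. -/
noncomputable def dcoef (g : ℕ) (a : ℕ → ℕ → ℂ) (h : ℕ) : ℂ :=
  if h = 1 then -Aprod g a 1 / Aprod g a 2 else 1

/-- The polynomial `α_{i,h}`: for `1 ≤ i ≤ k = ⌊g/2⌋`,
`α_{i,h}(t) = t·∏_{r≠i}(t − a_{r,h})`; for `k+1 ≤ i ≤ g−1`,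
`α_{i,h}(t) = −(d_h a_{i,h}/A_h)·∏_{r≠i}(t − a_{r,h})`. -/
noncomputable def alphaPoly (g : ℕ) (a : ℕ → ℕ → ℂ) (i h : ℕ) : Polynomial ℂ :=
  if i ≤ g / 2 then
    X * ∏ r ∈ (Finset.Icc 1 (g - 1)).erase i, (X - C (a r h))
  else
    C (-(dcoef g a h * a i h / Aprod g a h)) *
      ∏ r ∈ (Finset.Icc 1 (g - 1)).erase i, (X - C (a r h))

/-- Wronskian `ν_{ij,h} = α_{i,h} α'_{j,h} − α_{j,h} α'_{i,h}`. -/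
noncomputable def nuPoly (g : ℕ) (a : ℕ → ℕ → ℂ) (i j h : ℕ) : Polynomial ℂ :=
  alphaPoly g a i h * derivative (alphaPoly g a j h)
    - alphaPoly g a j h * derivative (alphaPoly g a i h)

/-- Torsion values: for `1 ≤ m ≤ g` (with the convention `a_{g,h} = 0`),
`τ_{ij,m} = α'_{j,1}(a_{m,1})·α'_{i,2}(a_{m,2}) − α'_{i,1}(a_{m,1})·α'_{j,2}(a_{m,2})`;
for `m = g+1`, `τ_{ij,g+1} = c_{j,1}c_{i,2} − c_{i,1}c_{j,2}` where `c_{i,h}` is the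
coefficient of `t^{g-2}` in `α_{i,h}`. -/
noncomputable def tauVal (g : ℕ) (a : ℕ → ℕ → ℂ) (i j m : ℕ) : ℂ :=
  if m ≤ g then
    (derivative (alphaPoly g a j 1)).eval (if m = g then 0 else a m 1) *
        (derivative (alphaPoly g a i 2)).eval (if m = g then 0 else a m 2)
      - (derivative (alphaPoly g a i 1)).eval (if m = g then 0 else a m 1) *
        (derivative (alphaPoly g a j 2)).eval (if m = g then 0 else a m 2)
  else
    (alphaPoly g a j 1).coeff (g - 2) * (alphaPoly g a i 2).coeff (g - 2)
      - (alphaPoly g a i 1).coeff (g - 2) * (alphaPoly g a j 2).coeff (g - 2)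

/-- The `(5g−5) × ((g−1)(g−2)/2)` Gaussian matrix: the column indexed by the pair
`(i,j)`, `1 ≤ i < j ≤ g−1`, consists of the `2g−3` coefficients of `ν_{ij,1}`, the
`2g−3` coefficients of `ν_{ij,2}`, and then `τ_{ij,1}, …, τ_{ij,g+1}`. -/
noncomputable def gaussMatrix (g : ℕ) (a : ℕ → ℕ → ℂ) :
    Matrix (Fin (5 * g - 5))
      {p : Fin g × Fin g // 1 ≤ (p.1 : ℕ) ∧ (p.1 : ℕ) < (p.2 : ℕ)} ℂ :=
  fun r p =>
    if (r : ℕ) < 2 * g - 3 then (nuPoly g a (p.1.1 : ℕ) (p.1.2 : ℕ) 1).coeff (r : ℕ)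
    else if (r : ℕ) < 2 * (2 * g - 3) then
      (nuPoly g a (p.1.1 : ℕ) (p.1.2 : ℕ) 2).coeff ((r : ℕ) - (2 * g - 3))
    else tauVal g a (p.1.1 : ℕ) (p.1.2 : ℕ) ((r : ℕ) - 2 * (2 * g - 3) + 1)

/-- The parameters `a_{1,h}, …, a_{g−1,h}` (`h = 1,2`) are nonzero and pairwise
distinct. -/
def validParams (g : ℕ) (a : ℕ → ℕ → ℂ) : Prop :=
  ∀ h, h = 1 ∨ h = 2 →
    (∀ i ∈ Finset.Icc 1 (g - 1), a i h ≠ 0) ∧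
      ∀ i ∈ Finset.Icc 1 (g - 1), ∀ j ∈ Finset.Icc 1 (g - 1), i ≠ j → a i h ≠ a j h

/-- The parameter choice `a_{i,1} = i·a`, `a_{i,2} = i`. -/
noncomputable def aAP (a : ℂ) : ℕ → ℕ → ℂ := fun i h =>
  if h = 1 then (i : ℂ) * a else (i : ℂ)

lemma deriv_prod_sub (t : Finset ℕ) (c : ℕ → ℂ) :
    derivative (∏ r ∈ t, (X - C (c r))) =
      ∑ b ∈ t, ∏ r ∈ t.erase b, (X - C (c r)) := by
  induction t using Finset.induction_on with
  | empty => simp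
  | insert _ _ ha ih =>
    rename_i a s
    rw [Finset.prod_insert ha, derivative_mul, ih, Finset.sum_insert ha,
      Finset.erase_insert ha]
    have h2 : ∀ b ∈ s, ∏ r ∈ (insert a s).erase b, (X - C (c r))
        = (X - C (c a)) * ∏ r ∈ s.erase b, (X - C (c r)) := by
      intro b hb
      rw [Finset.erase_insert_of_ne (by rintro rfl; exact ha hb),
        Finset.prod_insert (fun hmem => ha (Finset.mem_of_mem_erase hmem))]
    rw [Finset.sum_congr rfl h2, ← Finset.mul_sum]
    simp [add_comm]

lemma eval_prod_sub (t : Finset ℕ) (c : ℕ → ℂ) (x : ℂ) :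
    eval x (∏ r ∈ t, (X - C (c r))) = ∏ r ∈ t, (x - c r) := by
  simp [eval_prod]

lemma eval_deriv_prod_sub (t : Finset ℕ) (c : ℕ → ℂ) (x : ℂ) :
    eval x (derivative (∏ r ∈ t, (X - C (c r)))) =
      ∑ b ∈ t, ∏ r ∈ t.erase b, (x - c r) := by
  rw [deriv_prod_sub]
  simp [eval_finset_sum, eval_prod]

lemma nu_eval_one (B G : Polynomial ℂ) (z : ℂ) :
    eval z (((X - C z) * B) * derivative G - G * derivative ((X - C z) * B))
      = -(eval z G * eval z B) := by
  simp [derivative_mul]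

lemma nu_deriv_eval_one (B G : Polynomial ℂ) (z : ℂ) :
    eval z (derivative (((X - C z) * B) * derivative G - G * derivative ((X - C z) * B)))
      = -(2 * eval z G * eval z (derivative B)) := by
  simp [derivative_mul, derivative_sub]
  ring

lemma nu_eval_both (B1 B2 : Polynomial ℂ) (z : ℂ) :
    eval z (((X - C z) * B1) * derivative ((X - C z) * B2)
      - ((X - C z) * B2) * derivative ((X - C z) * B1)) = 0 := by
  simp [derivative_mul]

lemma nu_deriv_eval_both (B1 B2 : Polynomial ℂ) (z : ℂ) :
    eval z (derivative (((X - C z) * B1) * derivative ((X - C z) * B2)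
      - ((X - C z) * B2) * derivative ((X - C z) * B1))) = 0 := by
  simp [derivative_mul, derivative_sub]
  ring

lemma deriv_eval_factor (B : Polynomial ℂ) (z : ℂ) :
    eval z (derivative ((X - C z) * B)) = eval z B := by
  simp [derivative_mul]

lemma sum_prod_erase (t : Finset ℕ) (f : ℕ → ℂ) (hf : ∀ b ∈ t, f b ≠ 0) :
    ∑ b ∈ t, ∏ r ∈ t.erase b, f r = (∏ r ∈ t, f r) * ∑ b ∈ t, (f b)⁻¹ := by
  rw [Finset.mul_sum]
  refine Finset.sum_congr rfl fun b hb => ?_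
  rw [← Finset.prod_erase_mul t f hb, mul_inv_cancel_right₀ (hf b hb)]

section Struct
variable (k : ℕ) (A : ℕ → ℕ → ℂ) (h : ℕ) (u : ℂ)

lemma gdiv (hk : 1 ≤ k) : (2 * k + 1) / 2 = k := by omega

lemma alpha_mid (hk : 1 ≤ k) (hc : ∀ r : ℕ, A r h = (r : ℂ) * u) :
    alphaPoly (2 * k + 1) A (k + 1) h
      = C (-(dcoef (2 * k + 1) A h * A (k + 1) h / Aprod (2 * k + 1) A h)) *
          ∏ r ∈ (Finset.Icc 1 (2 * k)).erase (k + 1), (X - C (A r h)) := by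
  rw [alphaPoly, if_neg (by omega), Nat.add_sub_cancel]

lemma alpha_small (hk : 1 ≤ k) (hc : ∀ r : ℕ, A r h = (r : ℂ) * u)
    (i : ℕ) (h1 : 1 ≤ i) (h2 : i ≤ k) :
    alphaPoly (2 * k + 1) A i h
      = (X - C (((k : ℂ) + 1) * u)) *
          (X * ∏ r ∈ ((Finset.Icc 1 (2 * k)).erase (k + 1)).erase i, (X - C (A r h))) := by
  rw [alphaPoly, if_pos (by omega : i ≤ (2 * k + 1) / 2), Nat.add_sub_cancel]
  have hmem : k + 1 ∈ (Finset.Icc 1 (2 * k)).erase i := by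
    simp only [Finset.mem_erase, Finset.mem_Icc]
    omega
  rw [← Finset.mul_prod_erase _ _ hmem, Finset.erase_right_comm, hc (k + 1)]
  push_cast
  ring

lemma alpha_big (hk : 1 ≤ k) (hc : ∀ r : ℕ, A r h = (r : ℂ) * u)
    (j : ℕ) (h1 : k + 1 < j) (h2 : j ≤ 2 * k) :
    alphaPoly (2 * k + 1) A j h
      = (X - C (((k : ℂ) + 1) * u)) *
          (C (-(dcoef (2 * k + 1) A h * A j h / Aprod (2 * k + 1) A h)) *
            ∏ r ∈ ((Finset.Icc 1 (2 * k)).erase (k + 1)).erase j, (X - C (A r h))) := by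
  rw [alphaPoly, if_neg (by omega), Nat.add_sub_cancel]
  have hmem : k + 1 ∈ (Finset.Icc 1 (2 * k)).erase j := by
    simp only [Finset.mem_erase, Finset.mem_Icc]
    omega
  rw [← Finset.mul_prod_erase _ _ hmem, Finset.erase_right_comm, hc (k + 1)]
  push_cast
  ring

end Struct

section Vals
variable (k : ℕ) (A : ℕ → ℕ → ℂ) (h : ℕ) (u : ℂ)

lemma prodval (hc : ∀ r : ℕ, A r h = (r : ℂ) * u) (t : Finset ℕ) :
    ∏ r ∈ t, (((k : ℂ) + 1) * u - A r h)
      = u ^ t.card * ∏ r ∈ t, ((k : ℂ) + 1 - (r : ℂ)) := by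
  have : ∀ r ∈ t, ((k : ℂ) + 1) * u - A r h = u * ((k : ℂ) + 1 - (r : ℂ)) := by
    intro r _; rw [hc r]; ring
  rw [Finset.prod_congr rfl this, Finset.prod_mul_distrib, Finset.prod_const]

lemma sumval (hc : ∀ r : ℕ, A r h = (r : ℂ) * u) (t : Finset ℕ) :
    ∑ b ∈ t, ∏ r ∈ t.erase b, (((k : ℂ) + 1) * u - A r h)
      = u ^ (t.card - 1) * ∑ b ∈ t, ∏ r ∈ t.erase b, ((k : ℂ) + 1 - (r : ℂ)) := by
  rw [Finset.mul_sum]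
  refine Finset.sum_congr rfl fun b hb => ?_
  rw [prodval k A h u hc, Finset.card_erase_of_mem hb]

end Vals

section Evals
variable (k : ℕ) (A : ℕ → ℕ → ℂ) (h : ℕ) (u : ℂ)

-- abbreviations

lemma cardE (hk : 1 ≤ k) : ((Finset.Icc 1 (2 * k)).erase (k + 1)).card = 2 * k - 1 := by
  rw [Finset.card_erase_of_mem (by simp [Finset.mem_Icc]; omega), Nat.card_Icc]
  omega

lemma card_erase_E (hk : 1 ≤ k) (i : ℕ) (hi : i ∈ (Finset.Icc 1 (2 * k)).erase (k + 1)) : (((Finset.Icc 1 (2 * k)).erase (k + 1)).erase i).card = 2 * k - 2 := by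
  rw [Finset.card_erase_of_mem hi, cardE k hk]
  omega

lemma evalB_small (hk : 1 ≤ k) (hc : ∀ r : ℕ, A r h = (r : ℂ) * u)
    (i : ℕ) (hi : i ∈ (Finset.Icc 1 (2 * k)).erase (k + 1)) :
    eval (((k : ℂ) + 1) * u) (X * ∏ r ∈ ((Finset.Icc 1 (2 * k)).erase (k + 1)).erase i, (X - C (A r h)))
      = (((k : ℂ) + 1) * u) * (u ^ (2 * k - 2) * ∏ r ∈ ((Finset.Icc 1 (2 * k)).erase (k + 1)).erase i, ((k : ℂ) + 1 - (r : ℂ))) := by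
  rw [eval_mul, eval_X, eval_prod_sub, prodval k A h u hc, card_erase_E k hk i hi]

lemma evalB_small_deriv (hk : 1 ≤ k) (hc : ∀ r : ℕ, A r h = (r : ℂ) * u)
    (i : ℕ) (hi : i ∈ (Finset.Icc 1 (2 * k)).erase (k + 1)) :
    eval (((k : ℂ) + 1) * u) (derivative (X * ∏ r ∈ ((Finset.Icc 1 (2 * k)).erase (k + 1)).erase i, (X - C (A r h))))
      = u ^ (2 * k - 2) * ∏ r ∈ ((Finset.Icc 1 (2 * k)).erase (k + 1)).erase i, ((k : ℂ) + 1 - (r : ℂ))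
        + (((k : ℂ) + 1) * u) *
          (u ^ (2 * k - 3) *
            ∑ b ∈ ((Finset.Icc 1 (2 * k)).erase (k + 1)).erase i, ∏ r ∈ (((Finset.Icc 1 (2 * k)).erase (k + 1)).erase i).erase b, ((k : ℂ) + 1 - (r : ℂ))) := by
  rw [derivative_mul, derivative_X, one_mul, eval_add, eval_mul, eval_X,
    eval_prod_sub, eval_deriv_prod_sub, prodval k A h u hc, sumval k A h u hc,
    card_erase_E k hk i hi, show 2 * k - 2 - 1 = 2 * k - 3 from by omega]

lemma evalB_big (hk : 1 ≤ k) (hc : ∀ r : ℕ, A r h = (r : ℂ) * u)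
    (c : ℂ) (j : ℕ) (hj : j ∈ (Finset.Icc 1 (2 * k)).erase (k + 1)) :
    eval (((k : ℂ) + 1) * u) (C c * ∏ r ∈ ((Finset.Icc 1 (2 * k)).erase (k + 1)).erase j, (X - C (A r h)))
      = c * (u ^ (2 * k - 2) * ∏ r ∈ ((Finset.Icc 1 (2 * k)).erase (k + 1)).erase j, ((k : ℂ) + 1 - (r : ℂ))) := by
  rw [eval_mul, eval_C, eval_prod_sub, prodval k A h u hc, card_erase_E k hk j hj]

lemma evalB_big_deriv (hk : 1 ≤ k) (hc : ∀ r : ℕ, A r h = (r : ℂ) * u)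
    (c : ℂ) (j : ℕ) (hj : j ∈ (Finset.Icc 1 (2 * k)).erase (k + 1)) :
    eval (((k : ℂ) + 1) * u) (derivative (C c * ∏ r ∈ ((Finset.Icc 1 (2 * k)).erase (k + 1)).erase j, (X - C (A r h))))
      = c * (u ^ (2 * k - 3) *
          ∑ b ∈ ((Finset.Icc 1 (2 * k)).erase (k + 1)).erase j, ∏ r ∈ (((Finset.Icc 1 (2 * k)).erase (k + 1)).erase j).erase b, ((k : ℂ) + 1 - (r : ℂ))) := by
  rw [derivative_mul, derivative_C, zero_mul, zero_add, eval_mul, eval_C,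
    eval_deriv_prod_sub, sumval k A h u hc, card_erase_E k hk j hj,
    show 2 * k - 2 - 1 = 2 * k - 3 from by omega]

lemma evalG_prod (hk : 1 ≤ k) (hc : ∀ r : ℕ, A r h = (r : ℂ) * u) :
    eval (((k : ℂ) + 1) * u) (∏ r ∈ (Finset.Icc 1 (2 * k)).erase (k + 1), (X - C (A r h)))
      = u ^ (2 * k - 1) * ∏ r ∈ (Finset.Icc 1 (2 * k)).erase (k + 1), ((k : ℂ) + 1 - (r : ℂ)) := by
  rw [eval_prod_sub, prodval k A h u hc, cardE k hk]

lemma evalG_deriv (hk : 1 ≤ k) (hc : ∀ r : ℕ, A r h = (r : ℂ) * u) :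
    eval (((k : ℂ) + 1) * u) (derivative (∏ r ∈ (Finset.Icc 1 (2 * k)).erase (k + 1), (X - C (A r h))))
      = u ^ (2 * k - 2) * ∑ b ∈ (Finset.Icc 1 (2 * k)).erase (k + 1), ∏ r ∈ ((Finset.Icc 1 (2 * k)).erase (k + 1)).erase b, ((k : ℂ) + 1 - (r : ℂ)) := by
  rw [eval_deriv_prod_sub, sumval k A h u hc, cardE k hk,
    show 2 * k - 1 - 1 = 2 * k - 2 from by omega]

end Evals

section Pure
variable (k : ℕ)


lemma factor_ne (r : ℕ) (hr : r ∈ (Finset.Icc 1 (2 * k)).erase (k + 1)) : ((k : ℂ) + 1 - (r : ℂ)) ≠ 0 := by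
  rw [Finset.mem_erase] at hr
  rw [sub_ne_zero]
  intro he
  apply hr.1
  have h2 : ((r : ℕ) : ℂ) = ((k + 1 : ℕ) : ℂ) := by push_cast; exact he.symm
  exact Nat.cast_injective h2

lemma Qne : (∏ r ∈ (Finset.Icc 1 (2 * k)).erase (k + 1), ((k : ℂ) + 1 - (r : ℂ))) ≠ 0 :=
  Finset.prod_ne_zero_iff.2 (factor_ne k)

lemma q_erase (i : ℕ) (hi : i ∈ (Finset.Icc 1 (2 * k)).erase (k + 1)) :
    ∏ r ∈ ((Finset.Icc 1 (2 * k)).erase (k + 1)).erase i, ((k : ℂ) + 1 - (r : ℂ))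
      = (∏ r ∈ (Finset.Icc 1 (2 * k)).erase (k + 1), ((k : ℂ) + 1 - (r : ℂ))) * ((k : ℂ) + 1 - (i : ℂ))⁻¹ := by
  rw [← Finset.prod_erase_mul _ _ hi, mul_inv_cancel_right₀ (factor_ne k i hi)]

lemma sigma_erase (i : ℕ) (hi : i ∈ (Finset.Icc 1 (2 * k)).erase (k + 1)) :
    ∑ b ∈ ((Finset.Icc 1 (2 * k)).erase (k + 1)).erase i, ∏ r ∈ (((Finset.Icc 1 (2 * k)).erase (k + 1)).erase i).erase b, ((k : ℂ) + 1 - (r : ℂ))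
      = (∏ r ∈ (Finset.Icc 1 (2 * k)).erase (k + 1), ((k : ℂ) + 1 - (r : ℂ))) * ((k : ℂ) + 1 - (i : ℂ))⁻¹ *
          ((∑ r ∈ (Finset.Icc 1 (2 * k)).erase (k + 1), ((k : ℂ) + 1 - (r : ℂ))⁻¹) - ((k : ℂ) + 1 - (i : ℂ))⁻¹) := by
  rw [sum_prod_erase _ _ (fun b hb => factor_ne k b (Finset.mem_of_mem_erase hb)),
    q_erase k i hi, Finset.sum_erase_eq_sub hi]

lemma sigma_full :
    ∑ b ∈ (Finset.Icc 1 (2 * k)).erase (k + 1), ∏ r ∈ ((Finset.Icc 1 (2 * k)).erase (k + 1)).erase b, ((k : ℂ) + 1 - (r : ℂ))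
      = (∏ r ∈ (Finset.Icc 1 (2 * k)).erase (k + 1), ((k : ℂ) + 1 - (r : ℂ))) * ∑ r ∈ (Finset.Icc 1 (2 * k)).erase (k + 1), ((k : ℂ) + 1 - (r : ℂ))⁻¹ :=
  sum_prod_erase _ _ (factor_ne k)

end Pure

lemma nu_eval_one' (B G : Polynomial ℂ) (z : ℂ) :
    eval z (G * derivative ((X - C z) * B) - ((X - C z) * B) * derivative G)
      = eval z G * eval z B := by
  simp [derivative_mul]

lemma nu_deriv_eval_one' (B G : Polynomial ℂ) (z : ℂ) :
    eval z (derivative (G * derivative ((X - C z) * B) - ((X - C z) * B) * derivative G))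
      = 2 * eval z G * eval z (derivative B) := by
  simp [derivative_mul, derivative_sub]
  ring

section Full
variable (k : ℕ) (A : ℕ → ℕ → ℂ) (h : ℕ) (u : ℂ)

lemma evalGfull (hk : 1 ≤ k) (hc : ∀ r : ℕ, A r h = (r : ℂ) * u) (c : ℂ) :
    eval (((k : ℂ) + 1) * u) (C c * ∏ r ∈ (Finset.Icc 1 (2 * k)).erase (k + 1), (X - C (A r h)))
      = c * (u ^ (2 * k - 1) * ∏ r ∈ (Finset.Icc 1 (2 * k)).erase (k + 1), ((k : ℂ) + 1 - (r : ℂ))) := by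
  rw [eval_mul, eval_C, eval_prod_sub, prodval k A h u hc, cardE k hk]

lemma evalGfull_deriv (hk : 1 ≤ k) (hc : ∀ r : ℕ, A r h = (r : ℂ) * u) (c : ℂ) :
    eval (((k : ℂ) + 1) * u) (derivative (C c * ∏ r ∈ (Finset.Icc 1 (2 * k)).erase (k + 1), (X - C (A r h))))
      = c * (u ^ (2 * k - 2) *
          ∑ b ∈ (Finset.Icc 1 (2 * k)).erase (k + 1),
            ∏ r ∈ ((Finset.Icc 1 (2 * k)).erase (k + 1)).erase b, ((k : ℂ) + 1 - (r : ℂ))) := by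
  rw [derivative_mul, derivative_C, zero_mul, zero_add, eval_mul, eval_C,
    eval_deriv_prod_sub, sumval k A h u hc, cardE k hk,
    show 2 * k - 1 - 1 = 2 * k - 2 from by omega]

end Full

noncomputable def Nmat (K T : ℂ) : Matrix (Fin 5) (Fin 5) ℂ :=
  !![-((K+1)^2*(K-1)), -((K+1)^2*(K-2)), (K+1)*(2*K-1)*(2-K), (K+1)*(2*K)*(1-K), 0;
     -(2*(K+1)*((K^2-1)*T-2)), -(2*(K+1)*((K+1)*(K-2)*T-3)),
       2*(K+1)*(2*K-1)*((2-K)*T-1), 2*(K+1)*(2*K)*((1-K)*T-1), 0;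
     (K+1)^2*(K-1), (K+1)^2*(K-2), (K+1)*(2*K-1)*(2-K), (K+1)*(2*K)*(1-K), 0;
     2*(K+1)*((K^2-1)*T-2), 2*(K+1)*((K+1)*(K-2)*T-3),
       2*(K+1)*(2*K-1)*((2-K)*T-1), 2*(K+1)*(2*K)*((1-K)*T-1), 0;
     2*(K+1)^2*(K-1)*T, 2*(K+1)^2*(K-2)*T, 0, 0, -((K+1)*(K+2))]

set_option maxHeartbeats 4000000 in
set_option maxRecDepth 10000 in
lemma Nmat_det (K T : ℂ) : (Nmat K T).det = -(32*K*(2*K-1)*(K+1)^7*(K+2)) := by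
  simp [Nmat, Matrix.det_succ_row_zero, Fin.sum_univ_succ, Fin.succAbove, Fin.castSucc,
    Fin.castAdd, Fin.castLE, Fin.lt_def, -Fin.val_fin_lt, -Fin.lt_def]
  ring
set_option maxHeartbeats 16000000
set_option maxRecDepth 10000

/-- Let `g = 2k+1` with `k ≥ 6`, and let `a ∈ ℂ`, `a ≠ 0`, `a ≠ 1`.
With `a_{i,1} = i·a`, `a_{i,2} = i`, the 5×5 matrix whose columns are indexed by the
pairs `(2,k+1), (3,k+1), (k+1,g−2), (k+1,g−1), (k−1,k+2)` and whose rows are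
`ν_{ij,1}(a_{k+1,1}), ν'_{ij,1}(a_{k+1,1}), ν_{ij,2}(a_{k+1,2}), ν'_{ij,2}(a_{k+1,2}), τ_{ij,k+1}`
is invertible. -/
theorem odd_case_five_by_five_isUnit (g k : ℕ) (hgk : g = 2 * k + 1) (hk : 6 ≤ k)
    (a : ℂ) (ha0 : a ≠ 0) (ha1 : a ≠ 1) :
    IsUnit (Matrix.of fun (r c : Fin 5) =>
      (fun (i j : ℕ) =>
        ![(nuPoly g (aAP a) i j 1).eval (((k : ℂ) + 1) * a),
          (Polynomial.derivative (nuPoly g (aAP a) i j 1)).eval (((k : ℂ) + 1) * a),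
          (nuPoly g (aAP a) i j 2).eval ((k : ℂ) + 1),
          (Polynomial.derivative (nuPoly g (aAP a) i j 2)).eval ((k : ℂ) + 1),
          tauVal g (aAP a) i j (k + 1)] r)
      ((![(2, k + 1), (3, k + 1), (k + 1, g - 2), (k + 1, g - 1), (k - 1, k + 2)] :
          Fin 5 → ℕ × ℕ) c).1
      ((![(2, k + 1), (3, k + 1), (k + 1, g - 2), (k + 1, g - 1), (k - 1, k + 2)] :
          Fin 5 → ℕ × ℕ) c).2) := by
  subst hgk
  have hk1 : 1 ≤ k := by omega
  have hc1 : ∀ r : ℕ, aAP a r 1 = (r : ℂ) * a := fun r => by simp [aAP]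
  have hc2 : ∀ r : ℕ, aAP a r 2 = (r : ℂ) * 1 := fun r => by simp [aAP]
  have hm2 : 2 ∈ (Finset.Icc 1 (2 * k)).erase (k + 1) := by
    simp only [Finset.mem_erase, Finset.mem_Icc]; omega
  have hm3 : 3 ∈ (Finset.Icc 1 (2 * k)).erase (k + 1) := by
    simp only [Finset.mem_erase, Finset.mem_Icc]; omega
  have hmk1 : k - 1 ∈ (Finset.Icc 1 (2 * k)).erase (k + 1) := by
    simp only [Finset.mem_erase, Finset.mem_Icc]; omega
  have hmk2 : k + 2 ∈ (Finset.Icc 1 (2 * k)).erase (k + 1) := by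
    simp only [Finset.mem_erase, Finset.mem_Icc]; omega
  have hm2k1 : 2 * k - 1 ∈ (Finset.Icc 1 (2 * k)).erase (k + 1) := by
    simp only [Finset.mem_erase, Finset.mem_Icc]; omega
  have hm2k : 2 * k ∈ (Finset.Icc 1 (2 * k)).erase (k + 1) := by
    simp only [Finset.mem_erase, Finset.mem_Icc]; omega
  have hW0 : (∏ r ∈ Finset.Icc 1 (2 * k), (r : ℂ)) ≠ 0 :=
    Finset.prod_ne_zero_iff.2 fun r hr =>
      Nat.cast_ne_zero.2 (by simp [Finset.mem_Icc] at hr; omega)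
  have hQ0 : (∏ r ∈ (Finset.Icc 1 (2 * k)).erase (k + 1), ((k : ℂ) + 1 - (r : ℂ))) ≠ 0 := Qne k
  have hA2 : Aprod (2 * k + 1) (aAP a) 2 = ∏ r ∈ Finset.Icc 1 (2 * k), (r : ℂ) := by
    rw [Aprod, Nat.add_sub_cancel]
    exact Finset.prod_congr rfl fun r _ => by simp [aAP]
  have hA1 : Aprod (2 * k + 1) (aAP a) 1 = a ^ (2 * k) * ∏ r ∈ Finset.Icc 1 (2 * k), (r : ℂ) := by
    rw [Aprod, Nat.add_sub_cancel]
    rw [Finset.prod_congr rfl fun r _ => (by simp [aAP] : aAP a r 1 = (r : ℂ) * a),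
      Finset.prod_mul_distrib, Finset.prod_const, Nat.card_Icc,
      show 2 * k + 1 - 1 = 2 * k from by omega]
    ring
  have hd1 : dcoef (2 * k + 1) (aAP a) 1 = -a ^ (2 * k) := by
    rw [dcoef, if_pos rfl, hA1, hA2]
    field_simp
  have hcoef1 : ∀ j : ℕ, -(dcoef (2 * k + 1) (aAP a) 1 * aAP a j 1 / Aprod (2 * k + 1) (aAP a) 1)
      = (j : ℂ) * a / (∏ r ∈ Finset.Icc 1 (2 * k), (r : ℂ)) := by
    intro j
    rw [hd1, hA1, show aAP a j 1 = (j : ℂ) * a from by simp [aAP]]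
    field_simp
  have hcoef2 : ∀ j : ℕ, -(dcoef (2 * k + 1) (aAP a) 2 * aAP a j 2 / Aprod (2 * k + 1) (aAP a) 2)
      = -((j : ℂ) / (∏ r ∈ Finset.Icc 1 (2 * k), (r : ℂ))) := by
    intro j
    rw [dcoef, if_neg (by omega), hA2, show aAP a j 2 = (j : ℂ) from by simp [aAP]]
    ring
  have hK1 : ((k : ℂ) - 1) ≠ 0 := sub_ne_zero.2 (by exact_mod_cast (show k ≠ 1 by omega))
  have hK2 : ((k : ℂ) - 2) ≠ 0 := sub_ne_zero.2 (by exact_mod_cast (show k ≠ 2 by omega))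
  have hb2 : ((k : ℂ) + 1 - 2) ≠ 0 := fun h => hK1 (by linear_combination h)
  have hb3 : ((k : ℂ) + 1 - 3) ≠ 0 := fun h => hK2 (by linear_combination h)
  have hbk1 : ((k : ℂ) + 1 - ((k : ℂ) - 1)) ≠ 0 := fun h => absurd (show (2 : ℂ) = 0 by linear_combination h) two_ne_zero
  have hbk2 : ((k : ℂ) + 1 - ((k : ℂ) + 2)) ≠ 0 := fun h => absurd (show (1 : ℂ) = 0 by linear_combination -h) one_ne_zero
  have hb2k1 : ((k : ℂ) + 1 - (2 * (k : ℂ) - 1)) ≠ 0 := fun h => hK2 (by linear_combination -h)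
  have hb2k : ((k : ℂ) + 1 - 2 * (k : ℂ)) ≠ 0 := fun h => hK1 (by linear_combination -h)
  have h2mK : ((2 : ℂ) - (k : ℂ)) ≠ 0 := fun h => hK2 (by linear_combination -h)
  have h1mK : ((1 : ℂ) - (k : ℂ)) ≠ 0 := fun h => hK1 (by linear_combination -h)
  have hcast : ((k + 1 : ℕ) : ℂ) = (k : ℂ) + 1 := by push_cast; ring
  have hg1 : ((2 * k - 1 : ℕ) : ℂ) = 2 * (k : ℂ) - 1 := by
    rw [Nat.cast_sub (by omega : 1 ≤ 2 * k)]; push_cast; ring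
  have hg2 : ((k - 1 : ℕ) : ℂ) = (k : ℂ) - 1 := by
    rw [Nat.cast_sub (by omega : 1 ≤ k)]; push_cast; ring
  have hp1 : a ^ (2 * k - 1) = a ^ (2 * k - 3) * a ^ 2 := by rw [← pow_add]; congr 1; omega
  have hp2 : a ^ (2 * k - 2) = a ^ (2 * k - 3) * a := by rw [← pow_succ]; congr 1; omega
  have e00 : (nuPoly (2 * k + 1) (aAP a) (2) (k + 1) 1).eval (((k : ℂ) + 1) * a) * ((∏ r ∈ Finset.Icc 1 (2 * k), (r : ℂ)) * ((k : ℂ) - 1) ^ 2)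
      = (a ^ (2 * k - 3)) ^ 2 * a ^ 5 * (∏ r ∈ (Finset.Icc 1 (2 * k)).erase (k + 1), ((k : ℂ) + 1 - (r : ℂ))) ^ 2 * (-(((k : ℂ) + 1) ^ 2 * ((k : ℂ) - 1))) := by
    rw [nuPoly, alpha_small k (aAP a) 1 a hk1 hc1 (2) (by omega) (by omega),
      alpha_mid k (aAP a) 1 a hk1 hc1, nu_eval_one,
      evalB_small k (aAP a) 1 a hk1 hc1 (2) hm2,
      evalGfull k (aAP a) 1 a hk1 hc1 _, hcoef1 (k + 1), q_erase k (2) hm2, hp1, hp2]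
    push_cast [hg1, hg2]
    field_simp
    ring
  have e01 : (nuPoly (2 * k + 1) (aAP a) (3) (k + 1) 1).eval (((k : ℂ) + 1) * a) * ((∏ r ∈ Finset.Icc 1 (2 * k), (r : ℂ)) * ((k : ℂ) - 2) ^ 2)
      = (a ^ (2 * k - 3)) ^ 2 * a ^ 5 * (∏ r ∈ (Finset.Icc 1 (2 * k)).erase (k + 1), ((k : ℂ) + 1 - (r : ℂ))) ^ 2 * (-(((k : ℂ) + 1) ^ 2 * ((k : ℂ) - 2))) := by
    rw [nuPoly, alpha_small k (aAP a) 1 a hk1 hc1 (3) (by omega) (by omega),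
      alpha_mid k (aAP a) 1 a hk1 hc1, nu_eval_one,
      evalB_small k (aAP a) 1 a hk1 hc1 (3) hm3,
      evalGfull k (aAP a) 1 a hk1 hc1 _, hcoef1 (k + 1), q_erase k (3) hm3, hp1, hp2]
    push_cast [hg1, hg2]
    field_simp
    ring
  have e02 : (nuPoly (2 * k + 1) (aAP a) (k + 1) (2 * k - 1) 1).eval (((k : ℂ) + 1) * a) * ((∏ r ∈ Finset.Icc 1 (2 * k), (r : ℂ)) ^ 2 * (2 - (k : ℂ)) ^ 2)
      = (a ^ (2 * k - 3)) ^ 2 * a ^ 5 * (∏ r ∈ (Finset.Icc 1 (2 * k)).erase (k + 1), ((k : ℂ) + 1 - (r : ℂ))) ^ 2 * (((k : ℂ) + 1) * (2 * (k : ℂ) - 1) * (2 - (k : ℂ))) := by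
    rw [nuPoly, alpha_mid k (aAP a) 1 a hk1 hc1,
      alpha_big k (aAP a) 1 a hk1 hc1 (2 * k - 1) (by omega) (by omega), nu_eval_one',
      evalB_big k (aAP a) 1 a hk1 hc1 _ (2 * k - 1) hm2k1,
      evalGfull k (aAP a) 1 a hk1 hc1 _, hcoef1 (k + 1), hcoef1 (2 * k - 1), q_erase k (2 * k - 1) hm2k1, hp1, hp2]
    push_cast [hg1, hg2]
    field_simp
    linear_combination (2 * (k : ℂ) - 1) * mul_inv_cancel₀ h2mK
  have e03 : (nuPoly (2 * k + 1) (aAP a) (k + 1) (2 * k) 1).eval (((k : ℂ) + 1) * a) * ((∏ r ∈ Finset.Icc 1 (2 * k), (r : ℂ)) ^ 2 * (1 - (k : ℂ)) ^ 2)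
      = (a ^ (2 * k - 3)) ^ 2 * a ^ 5 * (∏ r ∈ (Finset.Icc 1 (2 * k)).erase (k + 1), ((k : ℂ) + 1 - (r : ℂ))) ^ 2 * (((k : ℂ) + 1) * (2 * (k : ℂ)) * (1 - (k : ℂ))) := by
    rw [nuPoly, alpha_mid k (aAP a) 1 a hk1 hc1,
      alpha_big k (aAP a) 1 a hk1 hc1 (2 * k) (by omega) (by omega), nu_eval_one',
      evalB_big k (aAP a) 1 a hk1 hc1 _ (2 * k) hm2k,
      evalGfull k (aAP a) 1 a hk1 hc1 _, hcoef1 (k + 1), hcoef1 (2 * k), q_erase k (2 * k) hm2k, hp1, hp2]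
    push_cast [hg1, hg2]
    field_simp
    linear_combination (k : ℂ) * mul_inv_cancel₀ h1mK
  have e04 : (nuPoly (2 * k + 1) (aAP a) (k - 1) (k + 2) 1).eval (((k : ℂ) + 1) * a) = 0 := by
    rw [nuPoly, alpha_small k (aAP a) 1 a hk1 hc1 (k - 1) (by omega) (by omega),
      alpha_big k (aAP a) 1 a hk1 hc1 (k + 2) (by omega) (by omega), nu_eval_both]

  have e10 : (Polynomial.derivative (nuPoly (2 * k + 1) (aAP a) (2) (k + 1) 1)).eval (((k : ℂ) + 1) * a) * ((∏ r ∈ Finset.Icc 1 (2 * k), (r : ℂ)) * ((k : ℂ) - 1) ^ 2)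
      = (a ^ (2 * k - 3)) ^ 2 * a ^ 4 * (∏ r ∈ (Finset.Icc 1 (2 * k)).erase (k + 1), ((k : ℂ) + 1 - (r : ℂ))) ^ 2 * (-(2 * ((k : ℂ) + 1) * (((k : ℂ) ^ 2 - 1) * (∑ r ∈ (Finset.Icc 1 (2 * k)).erase (k + 1), ((k : ℂ) + 1 - (r : ℂ))⁻¹) - 2))) := by
    rw [nuPoly, alpha_small k (aAP a) 1 a hk1 hc1 (2) (by omega) (by omega),
      alpha_mid k (aAP a) 1 a hk1 hc1, nu_deriv_eval_one,
      evalB_small_deriv k (aAP a) 1 a hk1 hc1 (2) hm2,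
      evalGfull k (aAP a) 1 a hk1 hc1 _, hcoef1 (k + 1), sigma_erase k (2) hm2,
      q_erase k (2) hm2, hp1, hp2]
    push_cast [hg1, hg2]
    field_simp
    ring
  have e11 : (Polynomial.derivative (nuPoly (2 * k + 1) (aAP a) (3) (k + 1) 1)).eval (((k : ℂ) + 1) * a) * ((∏ r ∈ Finset.Icc 1 (2 * k), (r : ℂ)) * ((k : ℂ) - 2) ^ 2)
      = (a ^ (2 * k - 3)) ^ 2 * a ^ 4 * (∏ r ∈ (Finset.Icc 1 (2 * k)).erase (k + 1), ((k : ℂ) + 1 - (r : ℂ))) ^ 2 * (-(2 * ((k : ℂ) + 1) * (((k : ℂ) + 1) * ((k : ℂ) - 2) * (∑ r ∈ (Finset.Icc 1 (2 * k)).erase (k + 1), ((k : ℂ) + 1 - (r : ℂ))⁻¹) - 3))) := by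
    rw [nuPoly, alpha_small k (aAP a) 1 a hk1 hc1 (3) (by omega) (by omega),
      alpha_mid k (aAP a) 1 a hk1 hc1, nu_deriv_eval_one,
      evalB_small_deriv k (aAP a) 1 a hk1 hc1 (3) hm3,
      evalGfull k (aAP a) 1 a hk1 hc1 _, hcoef1 (k + 1), sigma_erase k (3) hm3,
      q_erase k (3) hm3, hp1, hp2]
    push_cast [hg1, hg2]
    field_simp
    ring
  have e12 : (Polynomial.derivative (nuPoly (2 * k + 1) (aAP a) (k + 1) (2 * k - 1) 1)).eval (((k : ℂ) + 1) * a) * ((∏ r ∈ Finset.Icc 1 (2 * k), (r : ℂ)) ^ 2 * (2 - (k : ℂ)) ^ 2)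
      = (a ^ (2 * k - 3)) ^ 2 * a ^ 4 * (∏ r ∈ (Finset.Icc 1 (2 * k)).erase (k + 1), ((k : ℂ) + 1 - (r : ℂ))) ^ 2 * (2 * ((k : ℂ) + 1) * (2 * (k : ℂ) - 1) * ((2 - (k : ℂ)) * (∑ r ∈ (Finset.Icc 1 (2 * k)).erase (k + 1), ((k : ℂ) + 1 - (r : ℂ))⁻¹) - 1)) := by
    rw [nuPoly, alpha_mid k (aAP a) 1 a hk1 hc1,
      alpha_big k (aAP a) 1 a hk1 hc1 (2 * k - 1) (by omega) (by omega), nu_deriv_eval_one',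
      evalB_big_deriv k (aAP a) 1 a hk1 hc1 _ (2 * k - 1) hm2k1,
      evalGfull k (aAP a) 1 a hk1 hc1 _, hcoef1 (k + 1), hcoef1 (2 * k - 1),
      sigma_erase k (2 * k - 1) hm2k1, hp1]
    push_cast [hg1, hg2]
    field_simp
    ring
  have e13 : (Polynomial.derivative (nuPoly (2 * k + 1) (aAP a) (k + 1) (2 * k) 1)).eval (((k : ℂ) + 1) * a) * ((∏ r ∈ Finset.Icc 1 (2 * k), (r : ℂ)) ^ 2 * (1 - (k : ℂ)) ^ 2)
      = (a ^ (2 * k - 3)) ^ 2 * a ^ 4 * (∏ r ∈ (Finset.Icc 1 (2 * k)).erase (k + 1), ((k : ℂ) + 1 - (r : ℂ))) ^ 2 * (2 * ((k : ℂ) + 1) * (2 * (k : ℂ)) * ((1 - (k : ℂ)) * (∑ r ∈ (Finset.Icc 1 (2 * k)).erase (k + 1), ((k : ℂ) + 1 - (r : ℂ))⁻¹) - 1)) := by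
    rw [nuPoly, alpha_mid k (aAP a) 1 a hk1 hc1,
      alpha_big k (aAP a) 1 a hk1 hc1 (2 * k) (by omega) (by omega), nu_deriv_eval_one',
      evalB_big_deriv k (aAP a) 1 a hk1 hc1 _ (2 * k) hm2k,
      evalGfull k (aAP a) 1 a hk1 hc1 _, hcoef1 (k + 1), hcoef1 (2 * k),
      sigma_erase k (2 * k) hm2k, hp1]
    push_cast [hg1, hg2]
    field_simp
    ring
  have e14 : (Polynomial.derivative (nuPoly (2 * k + 1) (aAP a) (k - 1) (k + 2) 1)).eval (((k : ℂ) + 1) * a) = 0 := by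
    rw [nuPoly, alpha_small k (aAP a) 1 a hk1 hc1 (k - 1) (by omega) (by omega),
      alpha_big k (aAP a) 1 a hk1 hc1 (k + 2) (by omega) (by omega), nu_deriv_eval_both]

  have e20 : (nuPoly (2 * k + 1) (aAP a) (2) (k + 1) 2).eval ((k : ℂ) + 1) * ((∏ r ∈ Finset.Icc 1 (2 * k), (r : ℂ)) * ((k : ℂ) - 1) ^ 2)
      = (∏ r ∈ (Finset.Icc 1 (2 * k)).erase (k + 1), ((k : ℂ) + 1 - (r : ℂ))) ^ 2 * (((k : ℂ) + 1) ^ 2 * ((k : ℂ) - 1)) := by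
    conv_lhs => rw [show ((k : ℂ) + 1) = ((k : ℂ) + 1) * 1 from (mul_one _).symm]
    rw [nuPoly, alpha_small k (aAP a) 2 1 hk1 hc2 (2) (by omega) (by omega),
      alpha_mid k (aAP a) 2 1 hk1 hc2, nu_eval_one,
      evalB_small k (aAP a) 2 1 hk1 hc2 (2) hm2,
      evalGfull k (aAP a) 2 1 hk1 hc2 _, hcoef2 (k + 1), q_erase k (2) hm2]
    push_cast [hg1, hg2]
    field_simp
    ring
  have e21 : (nuPoly (2 * k + 1) (aAP a) (3) (k + 1) 2).eval ((k : ℂ) + 1) * ((∏ r ∈ Finset.Icc 1 (2 * k), (r : ℂ)) * ((k : ℂ) - 2) ^ 2)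
      = (∏ r ∈ (Finset.Icc 1 (2 * k)).erase (k + 1), ((k : ℂ) + 1 - (r : ℂ))) ^ 2 * (((k : ℂ) + 1) ^ 2 * ((k : ℂ) - 2)) := by
    conv_lhs => rw [show ((k : ℂ) + 1) = ((k : ℂ) + 1) * 1 from (mul_one _).symm]
    rw [nuPoly, alpha_small k (aAP a) 2 1 hk1 hc2 (3) (by omega) (by omega),
      alpha_mid k (aAP a) 2 1 hk1 hc2, nu_eval_one,
      evalB_small k (aAP a) 2 1 hk1 hc2 (3) hm3,
      evalGfull k (aAP a) 2 1 hk1 hc2 _, hcoef2 (k + 1), q_erase k (3) hm3]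
    push_cast [hg1, hg2]
    field_simp
    ring
  have e22 : (nuPoly (2 * k + 1) (aAP a) (k + 1) (2 * k - 1) 2).eval ((k : ℂ) + 1) * ((∏ r ∈ Finset.Icc 1 (2 * k), (r : ℂ)) ^ 2 * (2 - (k : ℂ)) ^ 2)
      = (∏ r ∈ (Finset.Icc 1 (2 * k)).erase (k + 1), ((k : ℂ) + 1 - (r : ℂ))) ^ 2 * (((k : ℂ) + 1) * (2 * (k : ℂ) - 1) * (2 - (k : ℂ))) := by
    conv_lhs => rw [show ((k : ℂ) + 1) = ((k : ℂ) + 1) * 1 from (mul_one _).symm]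
    rw [nuPoly, alpha_mid k (aAP a) 2 1 hk1 hc2,
      alpha_big k (aAP a) 2 1 hk1 hc2 (2 * k - 1) (by omega) (by omega), nu_eval_one',
      evalB_big k (aAP a) 2 1 hk1 hc2 _ (2 * k - 1) hm2k1,
      evalGfull k (aAP a) 2 1 hk1 hc2 _, hcoef2 (k + 1), hcoef2 (2 * k - 1), q_erase k (2 * k - 1) hm2k1]
    push_cast [hg1, hg2]
    field_simp
    linear_combination (2 * (k : ℂ) - 1) * mul_inv_cancel₀ h2mK
  have e23 : (nuPoly (2 * k + 1) (aAP a) (k + 1) (2 * k) 2).eval ((k : ℂ) + 1) * ((∏ r ∈ Finset.Icc 1 (2 * k), (r : ℂ)) ^ 2 * (1 - (k : ℂ)) ^ 2)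
      = (∏ r ∈ (Finset.Icc 1 (2 * k)).erase (k + 1), ((k : ℂ) + 1 - (r : ℂ))) ^ 2 * (((k : ℂ) + 1) * (2 * (k : ℂ)) * (1 - (k : ℂ))) := by
    conv_lhs => rw [show ((k : ℂ) + 1) = ((k : ℂ) + 1) * 1 from (mul_one _).symm]
    rw [nuPoly, alpha_mid k (aAP a) 2 1 hk1 hc2,
      alpha_big k (aAP a) 2 1 hk1 hc2 (2 * k) (by omega) (by omega), nu_eval_one',
      evalB_big k (aAP a) 2 1 hk1 hc2 _ (2 * k) hm2k,
      evalGfull k (aAP a) 2 1 hk1 hc2 _, hcoef2 (k + 1), hcoef2 (2 * k), q_erase k (2 * k) hm2k]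
    push_cast [hg1, hg2]
    field_simp
    linear_combination (k : ℂ) * mul_inv_cancel₀ h1mK
  have e24 : (nuPoly (2 * k + 1) (aAP a) (k - 1) (k + 2) 2).eval ((k : ℂ) + 1) = 0 := by
    conv_lhs => rw [show ((k : ℂ) + 1) = ((k : ℂ) + 1) * 1 from (mul_one _).symm]
    rw [nuPoly, alpha_small k (aAP a) 2 1 hk1 hc2 (k - 1) (by omega) (by omega),
      alpha_big k (aAP a) 2 1 hk1 hc2 (k + 2) (by omega) (by omega), nu_eval_both]

  have e30 : (Polynomial.derivative (nuPoly (2 * k + 1) (aAP a) (2) (k + 1) 2)).eval ((k : ℂ) + 1) * ((∏ r ∈ Finset.Icc 1 (2 * k), (r : ℂ)) * ((k : ℂ) - 1) ^ 2)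
      = (∏ r ∈ (Finset.Icc 1 (2 * k)).erase (k + 1), ((k : ℂ) + 1 - (r : ℂ))) ^ 2 * (2 * ((k : ℂ) + 1) * (((k : ℂ) ^ 2 - 1) * (∑ r ∈ (Finset.Icc 1 (2 * k)).erase (k + 1), ((k : ℂ) + 1 - (r : ℂ))⁻¹) - 2)) := by
    conv_lhs => rw [show ((k : ℂ) + 1) = ((k : ℂ) + 1) * 1 from (mul_one _).symm]
    rw [nuPoly, alpha_small k (aAP a) 2 1 hk1 hc2 (2) (by omega) (by omega),
      alpha_mid k (aAP a) 2 1 hk1 hc2, nu_deriv_eval_one,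
      evalB_small_deriv k (aAP a) 2 1 hk1 hc2 (2) hm2,
      evalGfull k (aAP a) 2 1 hk1 hc2 _, hcoef2 (k + 1), sigma_erase k (2) hm2,
      q_erase k (2) hm2]
    push_cast [hg1, hg2]
    field_simp
    ring
  have e31 : (Polynomial.derivative (nuPoly (2 * k + 1) (aAP a) (3) (k + 1) 2)).eval ((k : ℂ) + 1) * ((∏ r ∈ Finset.Icc 1 (2 * k), (r : ℂ)) * ((k : ℂ) - 2) ^ 2)
      = (∏ r ∈ (Finset.Icc 1 (2 * k)).erase (k + 1), ((k : ℂ) + 1 - (r : ℂ))) ^ 2 * (2 * ((k : ℂ) + 1) * (((k : ℂ) + 1) * ((k : ℂ) - 2) * (∑ r ∈ (Finset.Icc 1 (2 * k)).erase (k + 1), ((k : ℂ) + 1 - (r : ℂ))⁻¹) - 3)) := by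
    conv_lhs => rw [show ((k : ℂ) + 1) = ((k : ℂ) + 1) * 1 from (mul_one _).symm]
    rw [nuPoly, alpha_small k (aAP a) 2 1 hk1 hc2 (3) (by omega) (by omega),
      alpha_mid k (aAP a) 2 1 hk1 hc2, nu_deriv_eval_one,
      evalB_small_deriv k (aAP a) 2 1 hk1 hc2 (3) hm3,
      evalGfull k (aAP a) 2 1 hk1 hc2 _, hcoef2 (k + 1), sigma_erase k (3) hm3,
      q_erase k (3) hm3]
    push_cast [hg1, hg2]
    field_simp
    ring
  have e32 : (Polynomial.derivative (nuPoly (2 * k + 1) (aAP a) (k + 1) (2 * k - 1) 2)).eval ((k : ℂ) + 1) * ((∏ r ∈ Finset.Icc 1 (2 * k), (r : ℂ)) ^ 2 * (2 - (k : ℂ)) ^ 2)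
      = (∏ r ∈ (Finset.Icc 1 (2 * k)).erase (k + 1), ((k : ℂ) + 1 - (r : ℂ))) ^ 2 * (2 * ((k : ℂ) + 1) * (2 * (k : ℂ) - 1) * ((2 - (k : ℂ)) * (∑ r ∈ (Finset.Icc 1 (2 * k)).erase (k + 1), ((k : ℂ) + 1 - (r : ℂ))⁻¹) - 1)) := by
    conv_lhs => rw [show ((k : ℂ) + 1) = ((k : ℂ) + 1) * 1 from (mul_one _).symm]
    rw [nuPoly, alpha_mid k (aAP a) 2 1 hk1 hc2,
      alpha_big k (aAP a) 2 1 hk1 hc2 (2 * k - 1) (by omega) (by omega), nu_deriv_eval_one',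
      evalB_big_deriv k (aAP a) 2 1 hk1 hc2 _ (2 * k - 1) hm2k1,
      evalGfull k (aAP a) 2 1 hk1 hc2 _, hcoef2 (k + 1), hcoef2 (2 * k - 1), sigma_erase k (2 * k - 1) hm2k1]
    push_cast [hg1, hg2]
    field_simp
    ring
  have e33 : (Polynomial.derivative (nuPoly (2 * k + 1) (aAP a) (k + 1) (2 * k) 2)).eval ((k : ℂ) + 1) * ((∏ r ∈ Finset.Icc 1 (2 * k), (r : ℂ)) ^ 2 * (1 - (k : ℂ)) ^ 2)
      = (∏ r ∈ (Finset.Icc 1 (2 * k)).erase (k + 1), ((k : ℂ) + 1 - (r : ℂ))) ^ 2 * (2 * ((k : ℂ) + 1) * (2 * (k : ℂ)) * ((1 - (k : ℂ)) * (∑ r ∈ (Finset.Icc 1 (2 * k)).erase (k + 1), ((k : ℂ) + 1 - (r : ℂ))⁻¹) - 1)) := by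
    conv_lhs => rw [show ((k : ℂ) + 1) = ((k : ℂ) + 1) * 1 from (mul_one _).symm]
    rw [nuPoly, alpha_mid k (aAP a) 2 1 hk1 hc2,
      alpha_big k (aAP a) 2 1 hk1 hc2 (2 * k) (by omega) (by omega), nu_deriv_eval_one',
      evalB_big_deriv k (aAP a) 2 1 hk1 hc2 _ (2 * k) hm2k,
      evalGfull k (aAP a) 2 1 hk1 hc2 _, hcoef2 (k + 1), hcoef2 (2 * k), sigma_erase k (2 * k) hm2k]
    push_cast [hg1, hg2]
    field_simp
    ring
  have e34 : (Polynomial.derivative (nuPoly (2 * k + 1) (aAP a) (k - 1) (k + 2) 2)).eval ((k : ℂ) + 1) = 0 := by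
    conv_lhs => rw [show ((k : ℂ) + 1) = ((k : ℂ) + 1) * 1 from (mul_one _).symm]
    rw [nuPoly, alpha_small k (aAP a) 2 1 hk1 hc2 (k - 1) (by omega) (by omega),
      alpha_big k (aAP a) 2 1 hk1 hc2 (k + 2) (by omega) (by omega), nu_deriv_eval_both]

  have e40 : tauVal (2 * k + 1) (aAP a) (2) (k + 1) (k + 1) * ((∏ r ∈ Finset.Icc 1 (2 * k), (r : ℂ)) * ((k : ℂ) - 1) ^ 2)
      = a ^ (2 * k - 3) * a ^ 2 * (∏ r ∈ (Finset.Icc 1 (2 * k)).erase (k + 1), ((k : ℂ) + 1 - (r : ℂ))) ^ 2 * (2 * ((k : ℂ) + 1) ^ 2 * ((k : ℂ) - 1) * (∑ r ∈ (Finset.Icc 1 (2 * k)).erase (k + 1), ((k : ℂ) + 1 - (r : ℂ))⁻¹)) := by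
    simp only [tauVal, if_pos (show k + 1 ≤ 2 * k + 1 by omega), if_neg (show ¬(k + 1 = 2 * k + 1) by omega)]
    rw [hc1 (k + 1), hc2 (k + 1), hcast,
      alpha_small k (aAP a) 1 a hk1 hc1 (2) (by omega) (by omega),
      alpha_small k (aAP a) 2 1 hk1 hc2 (2) (by omega) (by omega),
      alpha_mid k (aAP a) 1 a hk1 hc1, alpha_mid k (aAP a) 2 1 hk1 hc2,
      deriv_eval_factor, deriv_eval_factor,
      evalGfull_deriv k (aAP a) 1 a hk1 hc1 _, evalGfull_deriv k (aAP a) 2 1 hk1 hc2 _,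
      evalB_small k (aAP a) 1 a hk1 hc1 (2) hm2, evalB_small k (aAP a) 2 1 hk1 hc2 (2) hm2,
      sigma_full k, hcoef1 (k + 1), hcoef2 (k + 1), q_erase k (2) hm2, hp2]
    push_cast [hg1, hg2]
    field_simp
    ring
  have e41 : tauVal (2 * k + 1) (aAP a) (3) (k + 1) (k + 1) * ((∏ r ∈ Finset.Icc 1 (2 * k), (r : ℂ)) * ((k : ℂ) - 2) ^ 2)
      = a ^ (2 * k - 3) * a ^ 2 * (∏ r ∈ (Finset.Icc 1 (2 * k)).erase (k + 1), ((k : ℂ) + 1 - (r : ℂ))) ^ 2 * (2 * ((k : ℂ) + 1) ^ 2 * ((k : ℂ) - 2) * (∑ r ∈ (Finset.Icc 1 (2 * k)).erase (k + 1), ((k : ℂ) + 1 - (r : ℂ))⁻¹)) := by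
    simp only [tauVal, if_pos (show k + 1 ≤ 2 * k + 1 by omega), if_neg (show ¬(k + 1 = 2 * k + 1) by omega)]
    rw [hc1 (k + 1), hc2 (k + 1), hcast,
      alpha_small k (aAP a) 1 a hk1 hc1 (3) (by omega) (by omega),
      alpha_small k (aAP a) 2 1 hk1 hc2 (3) (by omega) (by omega),
      alpha_mid k (aAP a) 1 a hk1 hc1, alpha_mid k (aAP a) 2 1 hk1 hc2,
      deriv_eval_factor, deriv_eval_factor,
      evalGfull_deriv k (aAP a) 1 a hk1 hc1 _, evalGfull_deriv k (aAP a) 2 1 hk1 hc2 _,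
      evalB_small k (aAP a) 1 a hk1 hc1 (3) hm3, evalB_small k (aAP a) 2 1 hk1 hc2 (3) hm3,
      sigma_full k, hcoef1 (k + 1), hcoef2 (k + 1), q_erase k (3) hm3, hp2]
    push_cast [hg1, hg2]
    field_simp
    ring
  have e42 : tauVal (2 * k + 1) (aAP a) (k + 1) (2 * k - 1) (k + 1) = 0 := by
    simp only [tauVal, if_pos (show k + 1 ≤ 2 * k + 1 by omega), if_neg (show ¬(k + 1 = 2 * k + 1) by omega)]
    rw [hc1 (k + 1), hc2 (k + 1), hcast,
      alpha_big k (aAP a) 1 a hk1 hc1 (2 * k - 1) (by omega) (by omega),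
      alpha_big k (aAP a) 2 1 hk1 hc2 (2 * k - 1) (by omega) (by omega),
      alpha_mid k (aAP a) 1 a hk1 hc1, alpha_mid k (aAP a) 2 1 hk1 hc2,
      deriv_eval_factor, deriv_eval_factor,
      evalGfull_deriv k (aAP a) 1 a hk1 hc1 _, evalGfull_deriv k (aAP a) 2 1 hk1 hc2 _,
      evalB_big k (aAP a) 1 a hk1 hc1 _ (2 * k - 1) hm2k1, evalB_big k (aAP a) 2 1 hk1 hc2 _ (2 * k - 1) hm2k1,
      sigma_full k, hcoef1 (k + 1), hcoef2 (k + 1), hcoef1 (2 * k - 1), hcoef2 (2 * k - 1), q_erase k (2 * k - 1) hm2k1, hp2]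
    push_cast [hg1, hg2]
    field_simp
    ring
  have e43 : tauVal (2 * k + 1) (aAP a) (k + 1) (2 * k) (k + 1) = 0 := by
    simp only [tauVal, if_pos (show k + 1 ≤ 2 * k + 1 by omega), if_neg (show ¬(k + 1 = 2 * k + 1) by omega)]
    rw [hc1 (k + 1), hc2 (k + 1), hcast,
      alpha_big k (aAP a) 1 a hk1 hc1 (2 * k) (by omega) (by omega),
      alpha_big k (aAP a) 2 1 hk1 hc2 (2 * k) (by omega) (by omega),
      alpha_mid k (aAP a) 1 a hk1 hc1, alpha_mid k (aAP a) 2 1 hk1 hc2,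
      deriv_eval_factor, deriv_eval_factor,
      evalGfull_deriv k (aAP a) 1 a hk1 hc1 _, evalGfull_deriv k (aAP a) 2 1 hk1 hc2 _,
      evalB_big k (aAP a) 1 a hk1 hc1 _ (2 * k) hm2k, evalB_big k (aAP a) 2 1 hk1 hc2 _ (2 * k) hm2k,
      sigma_full k, hcoef1 (k + 1), hcoef2 (k + 1), hcoef1 (2 * k), hcoef2 (2 * k), q_erase k (2 * k) hm2k, hp2]
    push_cast [hg1, hg2]
    field_simp
    ring
  have e44 : tauVal (2 * k + 1) (aAP a) (k - 1) (k + 2) (k + 1) * (∏ r ∈ Finset.Icc 1 (2 * k), (r : ℂ))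
      = a ^ (2 * k - 3) * a ^ 2 * (∏ r ∈ (Finset.Icc 1 (2 * k)).erase (k + 1), ((k : ℂ) + 1 - (r : ℂ))) ^ 2 * (-(((k : ℂ) + 1) * ((k : ℂ) + 2))) := by
    simp only [tauVal, if_pos (show k + 1 ≤ 2 * k + 1 by omega), if_neg (show ¬(k + 1 = 2 * k + 1) by omega)]
    rw [hc1 (k + 1), hc2 (k + 1), hcast,
      alpha_small k (aAP a) 1 a hk1 hc1 (k - 1) (by omega) (by omega),
      alpha_small k (aAP a) 2 1 hk1 hc2 (k - 1) (by omega) (by omega),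
      alpha_big k (aAP a) 1 a hk1 hc1 (k + 2) (by omega) (by omega),
      alpha_big k (aAP a) 2 1 hk1 hc2 (k + 2) (by omega) (by omega),
      deriv_eval_factor, deriv_eval_factor, deriv_eval_factor, deriv_eval_factor,
      evalB_small k (aAP a) 1 a hk1 hc1 (k - 1) hmk1, evalB_small k (aAP a) 2 1 hk1 hc2 (k - 1) hmk1,
      evalB_big k (aAP a) 1 a hk1 hc1 _ (k + 2) hmk2, evalB_big k (aAP a) 2 1 hk1 hc2 _ (k + 2) hmk2,
      hcoef1 (k + 2), hcoef2 (k + 2), q_erase k (k - 1) hmk1, q_erase k (k + 2) hmk2, hp2]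
    push_cast [hg1, hg2]
    field_simp
    ring
  have hMD : (Matrix.of fun (r c : Fin 5) =>
      (fun (i j : ℕ) =>
        ![(nuPoly (2 * k + 1) (aAP a) i j 1).eval (((k : ℂ) + 1) * a),
          (Polynomial.derivative (nuPoly (2 * k + 1) (aAP a) i j 1)).eval (((k : ℂ) + 1) * a),
          (nuPoly (2 * k + 1) (aAP a) i j 2).eval ((k : ℂ) + 1),
          (Polynomial.derivative (nuPoly (2 * k + 1) (aAP a) i j 2)).eval ((k : ℂ) + 1),
          tauVal (2 * k + 1) (aAP a) i j (k + 1)] r)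
      ((![(2, k + 1), (3, k + 1), (k + 1, 2 * k + 1 - 2), (k + 1, 2 * k + 1 - 1), (k - 1, k + 2)] :
          Fin 5 → ℕ × ℕ) c).1
      ((![(2, k + 1), (3, k + 1), (k + 1, 2 * k + 1 - 2), (k + 1, 2 * k + 1 - 1), (k - 1, k + 2)] :
          Fin 5 → ℕ × ℕ) c).2) *
        Matrix.diagonal ![((∏ r ∈ Finset.Icc 1 (2 * k), (r : ℂ)) * ((k : ℂ) - 1) ^ 2), ((∏ r ∈ Finset.Icc 1 (2 * k), (r : ℂ)) * ((k : ℂ) - 2) ^ 2), ((∏ r ∈ Finset.Icc 1 (2 * k), (r : ℂ)) ^ 2 * (2 - (k : ℂ)) ^ 2), ((∏ r ∈ Finset.Icc 1 (2 * k), (r : ℂ)) ^ 2 * (1 - (k : ℂ)) ^ 2), (∏ r ∈ Finset.Icc 1 (2 * k), (r : ℂ))]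
      = Matrix.diagonal ![(a ^ (2 * k - 3)) ^ 2 * a ^ 5 * (∏ r ∈ (Finset.Icc 1 (2 * k)).erase (k + 1), ((k : ℂ) + 1 - (r : ℂ))) ^ 2, (a ^ (2 * k - 3)) ^ 2 * a ^ 4 * (∏ r ∈ (Finset.Icc 1 (2 * k)).erase (k + 1), ((k : ℂ) + 1 - (r : ℂ))) ^ 2, (∏ r ∈ (Finset.Icc 1 (2 * k)).erase (k + 1), ((k : ℂ) + 1 - (r : ℂ))) ^ 2, (∏ r ∈ (Finset.Icc 1 (2 * k)).erase (k + 1), ((k : ℂ) + 1 - (r : ℂ))) ^ 2, a ^ (2 * k - 3) * a ^ 2 * (∏ r ∈ (Finset.Icc 1 (2 * k)).erase (k + 1), ((k : ℂ) + 1 - (r : ℂ))) ^ 2] *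
          Nmat ((k : ℂ)) (∑ r ∈ (Finset.Icc 1 (2 * k)).erase (k + 1), ((k : ℂ) + 1 - (r : ℂ))⁻¹) := by
    ext r c
    rw [Matrix.mul_diagonal, Matrix.diagonal_mul]
    fin_cases r <;> fin_cases c <;>
      simp [Nmat, show (2 * k + 1 - 2 : ℕ) = 2 * k - 1 from by omega,
        show (2 * k + 1 - 1 : ℕ) = 2 * k from by omega]
    · linear_combination e00
    · linear_combination e01
    · linear_combination e02
    · linear_combination e03
    · exact Or.inl e04
    · linear_combination e10
    · linear_combination e11
    · linear_combination e12
    · linear_combination e13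
    · exact Or.inl e14
    · linear_combination e20
    · linear_combination e21
    · linear_combination e22
    · linear_combination e23
    · exact Or.inl e24
    · linear_combination e30
    · linear_combination e31
    · linear_combination e32
    · linear_combination e33
    · exact Or.inl e34
    · linear_combination e40
    · linear_combination e41
    · exact Or.inl e42
    · exact Or.inl e43
    · linear_combination e44
  have hP0 : a ^ (2 * k - 3) ≠ 0 := pow_ne_zero _ ha0
  have hKK : ((k : ℂ)) ≠ 0 := Nat.cast_ne_zero.2 (by omega)
  have h2k1 : (2 * (k : ℂ) - 1) ≠ 0 := by rw [← hg1]; exact Nat.cast_ne_zero.2 (by omega)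
  have hKp1 : ((k : ℂ) + 1) ≠ 0 := by rw [← hcast]; exact Nat.cast_ne_zero.2 (by omega)
  have hKp2 : ((k : ℂ) + 2) ≠ 0 := by
    have h : ((k + 2 : ℕ) : ℂ) = (k : ℂ) + 2 := by push_cast; ring
    rw [← h]; exact Nat.cast_ne_zero.2 (by omega)
  rw [Matrix.isUnit_iff_isUnit_det, isUnit_iff_ne_zero]
  intro h
  have hdet := congrArg Matrix.det hMD
  rw [Matrix.det_mul, Matrix.det_mul, h, zero_mul, Matrix.det_diagonal, Nmat_det,
    Fin.prod_univ_five] at hdet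
  simp only [Matrix.cons_val_zero, Matrix.cons_val_one, Matrix.head_cons,
    Matrix.cons_val_two, Matrix.tail_cons, Matrix.cons_val_three, Matrix.cons_val_four] at hdet
  exact (mul_ne_zero
    (mul_ne_zero (mul_ne_zero (mul_ne_zero (mul_ne_zero
      (mul_ne_zero (mul_ne_zero (pow_ne_zero _ hP0) (pow_ne_zero _ ha0)) (pow_ne_zero _ hQ0))
      (mul_ne_zero (mul_ne_zero (pow_ne_zero _ hP0) (pow_ne_zero _ ha0)) (pow_ne_zero _ hQ0)))
      (pow_ne_zero _ hQ0)) (pow_ne_zero _ hQ0))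
      (mul_ne_zero (mul_ne_zero hP0 (pow_ne_zero _ ha0)) (pow_ne_zero _ hQ0)))
    (neg_ne_zero.2 (mul_ne_zero (mul_ne_zero (mul_ne_zero (mul_ne_zero
      (by norm_num : (32 : ℂ) ≠ 0) hKK) h2k1) (pow_ne_zero _ hKp1)) hKp2))) hdet.symm
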